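/- Let F be L-smooth with gradient ∇F, and let g_n = ∇F_n(w_n) for L-smooth component functions F_n with Σ_n ρ_n ∇F_n(w) = ∇F(w) (ρ_n ≥ 0, Σρ_n = 1). Suppose each w_n = w − η ∇F_n(w; D_n) for some gradient vectors bounded via the dissimilarity assumption Σ_n ρ_n ‖∇F_n(w)‖² ≤ α²‖∇F(w)‖² + β². Then ‖∇F(w) − Σ_n ρ_n ∇F_n(w_n)‖² ≤ L²η²(α²‖∇F(w)‖² + β²). -/
import Mathlib


/-- Single-local-step drift bound in FedSGD-ISCC under the bounded-dissimilarity
assumption: the discrepancy between the global gradient and the aggregate of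
local gradients after one step of size η is at most `L²η²(α²‖∇F(w)‖² + β²)`. -/
theorem fedsgd_single_step_drift {q N : ℕ}
    (gradF : EuclideanSpace ℝ (Fin q) → EuclideanSpace ℝ (Fin q))
    (gradFn : Fin N → EuclideanSpace ℝ (Fin q) → EuclideanSpace ℝ (Fin q))
    (L : ℝ) (hL : 0 ≤ L)
    (hLip : ∀ n x y, ‖gradFn n x - gradFn n y‖ ≤ L * ‖x - y‖)
    (ρ : Fin N → ℝ) (hρ : ∀ n, 0 ≤ ρ n) (hρsum : ∑ n, ρ n = 1)
    (hagg : ∀ x, ∑ n, ρ n • gradFn n x = gradF x)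
    (w : EuclideanSpace ℝ (Fin q)) (η : ℝ) (hη : 0 ≤ η)
    (gn : Fin N → EuclideanSpace ℝ (Fin q))
    (wn : Fin N → EuclideanSpace ℝ (Fin q)) (hwn : ∀ n, wn n = w - η • gn n)
    (hlocal : ∀ n, gn n = gradFn n w)
    (α2 β2 : ℝ) (hα2 : 1 ≤ α2) (hβ2 : 0 ≤ β2)
    (hdissim : ∑ n, ρ n * ‖gradFn n w‖ ^ 2 ≤ α2 * ‖gradF w‖ ^ 2 + β2) :
    ‖gradF w - ∑ n, ρ n • gradFn n (wn n)‖ ^ 2 ≤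
      L ^ 2 * η ^ 2 * (α2 * ‖gradF w‖ ^ 2 + β2) := by
  set a : Fin N → ℝ := fun n => ‖gradFn n w‖ with ha
  have hD : gradF w - ∑ n, ρ n • gradFn n (wn n)
      = ∑ n, ρ n • (gradFn n w - gradFn n (wn n)) := by
    rw [← hagg w, ← Finset.sum_sub_distrib]
    congr 1; ext n; rw [smul_sub]
  have hnorm : ‖gradF w - ∑ n, ρ n • gradFn n (wn n)‖
      ≤ ∑ n, ρ n * (L * η * a n) := by
    rw [hD]
    calc ‖∑ n, ρ n • (gradFn n w - gradFn n (wn n))‖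
        ≤ ∑ n, ‖ρ n • (gradFn n w - gradFn n (wn n))‖ := norm_sum_le _ _
      _ ≤ ∑ n, ρ n * (L * η * a n) := by
          apply Finset.sum_le_sum
          intro n _
          rw [norm_smul, Real.norm_eq_abs, abs_of_nonneg (hρ n)]
          apply mul_le_mul_of_nonneg_left _ (hρ n)
          calc ‖gradFn n w - gradFn n (wn n)‖ ≤ L * ‖w - wn n‖ := hLip n w (wn n)
            _ = L * (η * a n) := by
                rw [hwn n, hlocal n]
                congr 1
                rw [sub_sub_cancel, norm_smul, Real.norm_eq_abs, abs_of_nonneg hη]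
            _ = L * η * a n := by ring
  have hnn : 0 ≤ ∑ n, ρ n * (L * η * a n) := by
    apply Finset.sum_nonneg
    intro n _
    exact mul_nonneg (hρ n) (mul_nonneg (mul_nonneg hL hη) (norm_nonneg _))
  have hsq : ‖gradF w - ∑ n, ρ n • gradFn n (wn n)‖ ^ 2
      ≤ (∑ n, ρ n * (L * η * a n)) ^ 2 :=
    pow_le_pow_left₀ (norm_nonneg _) hnorm 2
  -- Cauchy–Schwarz / Jensen step
  have hCS : (∑ n, ρ n * (L * η * a n)) ^ 2
      ≤ (∑ n, ρ n) * (∑ n, ρ n * (L * η * a n) ^ 2) := by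
    have h := Finset.sum_mul_sq_le_sq_mul_sq Finset.univ
      (fun n => Real.sqrt (ρ n)) (fun n => Real.sqrt (ρ n) * (L * η * a n))
    have e1 : ∀ n : Fin N, Real.sqrt (ρ n) * (Real.sqrt (ρ n) * (L * η * a n))
        = ρ n * (L * η * a n) := by
      intro n
      rw [← mul_assoc, Real.mul_self_sqrt (hρ n)]
    have e2 : ∀ n : Fin N, Real.sqrt (ρ n) ^ 2 = ρ n := fun n =>
      Real.sq_sqrt (hρ n)
    have e3 : ∀ n : Fin N, (Real.sqrt (ρ n) * (L * η * a n)) ^ 2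
        = ρ n * (L * η * a n) ^ 2 := by
      intro n
      rw [mul_pow, e2]
    simp only [e1, e2, e3] at h
    exact h
  rw [hρsum, one_mul] at hCS
  have hfinal : ∑ n, ρ n * (L * η * a n) ^ 2
      ≤ L ^ 2 * η ^ 2 * (α2 * ‖gradF w‖ ^ 2 + β2) := by
    have : ∀ n : Fin N, ρ n * (L * η * a n) ^ 2
        = L ^ 2 * η ^ 2 * (ρ n * a n ^ 2) := by intro n; ring
    simp only [this, ← Finset.mul_sum]
    exact mul_le_mul_of_nonneg_left hdissim
      (mul_nonneg (sq_nonneg L) (sq_nonneg η))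
  linarith
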